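/- Let X ∈ ℝ^{d×n}, and for i = 1,…,L let σᵢ : ℝ^{dᵢ×n} → ℝ^{dᵢ×n} be ρᵢ-Lipschitz with respect to the Frobenius norm with σᵢ(0)=0, and let aᵢ, sᵢ > 0, with d₀ = d. Let {1,…,L} be partitioned into a set S_A of fully connected layers and a set S_W of convolutional layers. For i ∈ S_A the layer matrix is Cᵢ = Aᵢ ∈ ℝ^{dᵢ×d_{i−1}}; for i ∈ S_W the layer matrix is Cᵢ = γᵢ(Wᵢ) ∈ ℝ^{dᵢ×d_{i−1}}, the fully connected matrix built from a convolutional weight Wᵢ ∈ ℝ^{cᵢ×rᵢ} via mᵢ = dᵢ/cᵢ fixed injective index maps. Define H = { σ_L(C_L σ_{L−1}(C_{L−1} ⋯ σ₁(C₁ X) ⋯)) : ‖Aᵢ‖_F ≤ aᵢ for i ∈ S_A, ‖Wᵢ‖_F ≤ aᵢ for i ∈ S_W, and ‖Cᵢ‖_σ ≤ sᵢ for all i } ⊆ ℝ^{d_L×n}, and let R_C = (2∏_{i=1}^{L} ρᵢ sᵢ)·(Σ_{i∈S_A} dᵢ² d_{i−1}² aᵢ / sᵢ + Σ_{i∈S_W}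 cᵢ² rᵢ² aᵢ √(dᵢ/cᵢ) / sᵢ)·L². Then for every ε > 0 there exists a finite set U of matrices in ℝ^{d_L×n} with ln|U| ≤ (‖X‖_F · R_C / ε)^{1/2} such that every element of H is within Frobenius distance ε of some element of U. -/

import Mathlib

noncomputable def frobNorm {α β : Type*} [Fintype α] [Fintype β] (M : Matrix α β ℝ) : ℝ :=
  Real.sqrt (∑ i, ∑ j, (M i j) ^ 2)

noncomputable def specNorm {α β : Type*} [Fintype α] [Fintype β] [DecidableEq β]
    (M : Matrix α β ℝ) : ℝ :=
  ‖LinearMap.toContinuousLinearMap (Matrix.toEuclideanLin M)‖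

/-- The fully connected matrix `γ(W)` built from a convolutional weight `W ∈ ℝ^{c×r}` via
`m` index maps `S k : Fin r → Fin d`. -/
noncomputable def gamma {c r d m : ℕ} (S : Fin m → Fin r → Fin d)
    (W : Matrix (Fin c) (Fin r) ℝ) : Matrix (Fin c × Fin m) (Fin d) ℝ :=
  fun ik j => ∑ p, if S ik.2 p = j then W ik.1 p else 0

noncomputable def netOutput {n : ℕ} (d : ℕ → ℕ)
    (C : ∀ i : ℕ, Matrix (Fin (d (i+1))) (Fin (d i)) ℝ)
    (σ : ∀ i : ℕ, Matrix (Fin (d (i+1))) (Fin n) ℝ → Matrix (Fin (d (i+1))) (Fin n) ℝ)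
    (X : Matrix (Fin (d 0)) (Fin n) ℝ) : (ℓ : ℕ) → Matrix (Fin (d ℓ)) (Fin n) ℝ
  | 0 => X
  | (ℓ+1) => σ ℓ (C ℓ * netOutput d C σ X ℓ)

open MeasureTheory Metric Set
open scoped ENNReal

lemma euclid_net {ι : Type*} [Fintype ι] (K : Set (EuclideanSpace ℝ ι)) {a ε : ℝ}
    (ha : 0 ≤ a) (hε : 0 < ε) (hK : ∀ x ∈ K, ‖x‖ ≤ a) :
    ∃ N : Finset (EuclideanSpace ℝ ι), ↑N ⊆ K ∧
      (N.card : ℝ) ≤ (1 + 2 * a / ε) ^ (Fintype.card ι) ∧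
      ∀ x ∈ K, ∃ p ∈ N, dist x p ≤ ε := by
  classical
  set D := Fintype.card ι with hD
  set B : ℝ := (1 + 2 * a / ε) ^ D with hB
  have hB0 : (0:ℝ) ≤ B := by positivity
  have hsep : ∀ N : Finset (EuclideanSpace ℝ ι), ↑N ⊆ K →
      (∀ p ∈ N, ∀ q ∈ N, p ≠ q → ε < dist p q) → (N.card : ℝ) ≤ B := by
    intro N hNK hNsep
    have hdisj : (N : Set (EuclideanSpace ℝ ι)).Pairwise
        (Function.onFun Disjoint (fun p => ball p (ε/2))) := by
      intro p hp q hq hpq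
      refine ball_disjoint_ball ?_
      have := hNsep p hp q hq hpq
      linarith
    have hvol1 : volume (⋃ p ∈ N, ball p (ε/2)) = ∑ p ∈ N, volume (ball p (ε/2)) :=
      measure_biUnion_finset hdisj (fun p _ => measurableSet_ball)
    have hsub : (⋃ p ∈ N, ball p (ε/2)) ⊆ ball (0 : EuclideanSpace ℝ ι) (a + ε/2) := by
      intro y hy
      simp only [Set.mem_iUnion] at hy
      obtain ⟨p, hp, hyp⟩ := hy
      have h1 : ‖p‖ ≤ a := hK p (hNK hp)
      have h2 : dist y p < ε/2 := mem_ball.mp hyp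
      have : dist y 0 < a + ε/2 := by
        calc dist y (0 : EuclideanSpace ℝ ι) ≤ dist y p + dist p 0 := dist_triangle _ _ _
        _ < ε/2 + a := by rw [dist_zero_right]; linarith
        _ = a + ε/2 := by ring
      exact mem_ball.mpr this
    have hε2 : (0:ℝ) < ε/2 := by linarith
    have hkey : (N.card : ℝ≥0∞) * volume (ball (0 : EuclideanSpace ℝ ι) (ε/2))
        ≤ volume (ball (0 : EuclideanSpace ℝ ι) (a + ε/2)) := by
      calc (N.card : ℝ≥0∞) * volume (ball (0 : EuclideanSpace ℝ ι) (ε/2))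
          = ∑ p ∈ N, volume (ball p (ε/2)) := by
            rw [Finset.sum_congr rfl (fun p _ => Measure.addHaar_ball_center volume p (ε/2))]
            simp [mul_comm]
        _ = volume (⋃ p ∈ N, ball p (ε/2)) := hvol1.symm
        _ ≤ volume (ball (0 : EuclideanSpace ℝ ι) (a + ε/2)) := measure_mono hsub
    rw [Measure.addHaar_ball_of_pos volume _ hε2,
        Measure.addHaar_ball_of_pos volume _ (by linarith : (0:ℝ) < a + ε/2),
        finrank_euclideanSpace] at hkey
    have hu0 : volume (ball (0 : EuclideanSpace ℝ ι) 1) ≠ 0 := (measure_ball_pos _ _ one_pos).ne'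
    have hut : volume (ball (0 : EuclideanSpace ℝ ι) 1) ≠ ⊤ := measure_ball_lt_top.ne
    rw [← mul_assoc] at hkey
    have hkey2 : (N.card : ℝ≥0∞) * ENNReal.ofReal ((ε/2) ^ D) ≤ ENNReal.ofReal ((a + ε/2) ^ D) :=
      (ENNReal.mul_le_mul_iff_left hu0 hut).mp hkey
    -- to reals
    have hfin1 : (N.card : ℝ≥0∞) * ENNReal.ofReal ((ε/2) ^ D) ≠ ⊤ :=
      ENNReal.mul_ne_top (ENNReal.natCast_ne_top _) ENNReal.ofReal_ne_top
    have hreal : (N.card : ℝ) * (ε/2) ^ D ≤ (a + ε/2) ^ D := by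
      have := ENNReal.toReal_mono ENNReal.ofReal_ne_top hkey2
      rwa [ENNReal.toReal_mul, ENNReal.toReal_natCast, ENNReal.toReal_ofReal (by positivity),
        ENNReal.toReal_ofReal (by positivity)] at this
    have hpow : (0:ℝ) < (ε/2) ^ D := by positivity
    rw [hB]
    have : (1 + 2 * a / ε) = (a + ε/2) / (ε/2) := by field_simp; ring
    rw [this, div_pow, le_div_iff₀ hpow]
    exact hreal
  -- choose a maximal separated set
  set SEP : Finset (EuclideanSpace ℝ ι) → Prop := fun N =>
    ↑N ⊆ K ∧ ∀ p ∈ N, ∀ q ∈ N, p ≠ q → ε < dist p q with hSEP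
  set S : Set ℕ := {k | ∃ N, SEP N ∧ N.card = k} with hS
  have h0S : 0 ∈ S := ⟨∅, ⟨by simp, by simp⟩, rfl⟩
  have hbdd : BddAbove S := by
    refine ⟨⌊B⌋₊, fun k hk => ?_⟩
    obtain ⟨N, ⟨hN1, hN2⟩, rfl⟩ := hk
    exact Nat.le_floor (hsep N hN1 hN2)
  obtain ⟨N, hN, hNcard⟩ := Nat.sSup_mem ⟨0, h0S⟩ hbdd
  refine ⟨N, hN.1, hsep N hN.1 hN.2, ?_⟩
  intro x hx
  by_contra hcon
  push_neg at hcon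
  have hxN : x ∉ N := by
    intro hxN
    have := hcon x hxN
    simp at this
    linarith
  have hSEP' : SEP (insert x N) := by
    constructor
    · intro y hy
      rcases Finset.mem_insert.mp (by exact_mod_cast hy) with h | h
      · exact h ▸ hx
      · exact hN.1 h
    · intro p hp q hq hpq
      rcases Finset.mem_insert.mp hp with hp' | hp' <;>
        rcases Finset.mem_insert.mp hq with hq' | hq'
      · exact absurd (hp'.trans hq'.symm) hpq
      · subst hp'; exact lt_of_lt_of_le (hcon q hq') (le_of_eq rfl)
      · subst hq'; rw [dist_comm]; exact hcon p hp'
      · exact hN.2 p hp' q hq' hpq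
  have : N.card + 1 ≤ sSup S := le_csSup hbdd ⟨insert x N, hSEP', by rw [Finset.card_insert_of_notMem hxN]⟩
  omega

namespace Aux
variable {α β γ : Type*} [Fintype α] [Fintype β] [Fintype γ]

noncomputable def toEuc (M : Matrix α β ℝ) : EuclideanSpace ℝ (α × β) :=
  (WithLp.equiv 2 _).symm (fun ij => M ij.1 ij.2)

lemma frob_eq (M : Matrix α β ℝ) : frobNorm M = ‖toEuc M‖ := by
  rw [EuclideanSpace.norm_eq, frobNorm, Fintype.sum_prod_type]
  congr 1
  refine Finset.sum_congr rfl fun i _ => Finset.sum_congr rfl fun j _ => ?_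
  simp [toEuc, Real.norm_eq_abs, sq_abs]

lemma toEuc_sub (A B : Matrix α β ℝ) : toEuc (A - B) = toEuc A - toEuc B := rfl

lemma frob_nonneg (M : Matrix α β ℝ) : 0 ≤ frobNorm M := Real.sqrt_nonneg _

lemma frob_zero : frobNorm (0 : Matrix α β ℝ) = 0 := by simp [frobNorm]

lemma frob_sub_dist (A B : Matrix α β ℝ) : frobNorm (A - B) = dist (toEuc A) (toEuc B) := by
  rw [dist_eq_norm, frob_eq, toEuc_sub]

lemma frob_sq (M : Matrix α β ℝ) : frobNorm M ^ 2 = ∑ i, ∑ j, (M i j) ^ 2 :=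
  Real.sq_sqrt (by positivity)

noncomputable def colE (Y : Matrix β γ ℝ) (j : γ) : EuclideanSpace ℝ β :=
  (WithLp.equiv 2 _).symm (fun i => Y i j)

lemma frob_sq_col (Y : Matrix β γ ℝ) : frobNorm Y ^ 2 = ∑ j, ‖colE Y j‖ ^ 2 := by
  rw [frob_sq, Finset.sum_comm]
  refine Finset.sum_congr rfl fun j _ => ?_
  rw [EuclideanSpace.norm_eq, Real.sq_sqrt (by positivity)]
  refine Finset.sum_congr rfl fun i _ => ?_
  simp [colE, Real.norm_eq_abs, sq_abs]

lemma frob_of_sq_le {A : Matrix α β ℝ} {t : ℝ} (h : frobNorm A ^ 2 ≤ t ^ 2) (ht : 0 ≤ t) :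
    frobNorm A ≤ t := by
  nlinarith [frob_nonneg A]

lemma frob_mul_le_spec [DecidableEq β] (M : Matrix α β ℝ) (Y : Matrix β γ ℝ) :
    frobNorm (M * Y) ≤ specNorm M * frobNorm Y := by
  have hcol : ∀ j, colE (M * Y) j = Matrix.toEuclideanLin M (colE Y j) := by
    intro j
    rw [colE, colE, WithLp.equiv_symm_apply, Matrix.toEuclideanLin_apply_piLp_toLp]
    congr 1
  have hb : ∀ j, ‖Matrix.toEuclideanLin M (colE Y j)‖ ≤ specNorm M * ‖colE Y j‖ := by
    intro j
    have := (LinearMap.toContinuousLinearMap (Matrix.toEuclideanLin M)).le_opNorm (colE Y j)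
    simpa [specNorm] using this
  have hsq : frobNorm (M * Y) ^ 2 ≤ (specNorm M * frobNorm Y) ^ 2 := by
    rw [frob_sq_col, mul_pow, frob_sq_col]
    rw [Finset.mul_sum]
    refine Finset.sum_le_sum fun j _ => ?_
    rw [hcol j]
    calc ‖Matrix.toEuclideanLin M (colE Y j)‖ ^ 2 ≤ (specNorm M * ‖colE Y j‖) ^ 2 := by
          have h0 : (0:ℝ) ≤ specNorm M * ‖colE Y j‖ :=
            mul_nonneg (norm_nonneg _) (norm_nonneg _)
          nlinarith [hb j, norm_nonneg (Matrix.toEuclideanLin M (colE Y j))]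
      _ = specNorm M ^ 2 * ‖colE Y j‖ ^ 2 := by ring
  exact frob_of_sq_le hsq (mul_nonneg (norm_nonneg _) (frob_nonneg _))

lemma frob_mul_le_frob (M : Matrix α β ℝ) (Y : Matrix β γ ℝ) :
    frobNorm (M * Y) ≤ frobNorm M * frobNorm Y := by
  have hsq : frobNorm (M * Y) ^ 2 ≤ (frobNorm M * frobNorm Y) ^ 2 := by
    rw [frob_sq, mul_pow, frob_sq, frob_sq]
    calc ∑ i, ∑ j, ((M * Y) i j) ^ 2
        ≤ ∑ i, ∑ j : γ, (∑ k, (M i k) ^ 2) * (∑ k, (Y k j) ^ 2) :=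
          Finset.sum_le_sum fun i _ => Finset.sum_le_sum fun j _ => by
            rw [Matrix.mul_apply]; exact Finset.sum_mul_sq_le_sq_mul_sq _ _ _
      _ = (∑ i, ∑ k, (M i k) ^ 2) * (∑ j : γ, ∑ k, (Y k j) ^ 2) := by
          simp_rw [← Finset.mul_sum]
          rw [← Finset.sum_mul]
      _ = (∑ i, ∑ k, (M i k) ^ 2) * (∑ k, ∑ j : γ, (Y k j) ^ 2) := by
          congr 1
          exact Finset.sum_comm
  exact frob_of_sq_le hsq (mul_nonneg (frob_nonneg _) (frob_nonneg _))

lemma frob_triangle_sub (A B C : Matrix α β ℝ) :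
    frobNorm (A - C) ≤ frobNorm (A - B) + frobNorm (B - C) := by
  rw [frob_sub_dist, frob_sub_dist, frob_sub_dist]
  exact dist_triangle _ _ _

noncomputable def toEucEquiv : Matrix α β ℝ ≃ EuclideanSpace ℝ (α × β) where
  toFun := toEuc
  invFun x := Matrix.of fun i j => x (i, j)
  left_inv := fun M => rfl
  right_inv := fun x => rfl

lemma matrix_net (K : Set (Matrix α β ℝ)) {a δ : ℝ} (ha : 0 ≤ a) (hδ : 0 < δ)
    (hK : ∀ M ∈ K, frobNorm M ≤ a) :
    ∃ N : Finset (Matrix α β ℝ), ↑N ⊆ K ∧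
      (N.card : ℝ) ≤ (1 + 2 * a / δ) ^ (Fintype.card α * Fintype.card β) ∧
      ∀ M ∈ K, ∃ P ∈ N, frobNorm (M - P) ≤ δ := by
  classical
  obtain ⟨N', hN'K, hN'card, hN'cov⟩ := euclid_net (toEuc '' K) ha hδ (by
    rintro x ⟨M, hM, rfl⟩
    rw [← frob_eq]
    exact hK M hM)
  refine ⟨N'.image toEucEquiv.symm, ?_, ?_, ?_⟩
  · intro P hP
    simp only [Finset.coe_image, Set.mem_image, Finset.mem_coe] at hP
    obtain ⟨x, hx, rfl⟩ := hP
    obtain ⟨M, hM, rfl⟩ := hN'K hx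
    exact hM
  · calc ((N'.image toEucEquiv.symm).card : ℝ) ≤ (N'.card : ℝ) := by
          exact_mod_cast Finset.card_image_le
      _ ≤ _ := by rw [← Fintype.card_prod]; exact hN'card
  · intro M hM
    obtain ⟨p, hp, hdist⟩ := hN'cov (toEuc M) ⟨M, hM, rfl⟩
    refine ⟨toEucEquiv.symm p, Finset.mem_image_of_mem _ hp, ?_⟩
    rw [frob_sub_dist]
    have : toEuc (toEucEquiv.symm p) = p := toEucEquiv.apply_symm_apply p
    rw [this]
    exact hdist

lemma reindex_frob {α' : Type*} [Fintype α'] (e : α ≃ α') (M : Matrix α β ℝ) :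
    frobNorm (Matrix.reindex e (Equiv.refl β) M) = frobNorm M := by
  rw [frobNorm, frobNorm]
  congr 1
  refine (Fintype.sum_equiv e _ _ fun i => ?_).symm
  simp [Matrix.reindex_apply, Matrix.submatrix_apply]

lemma reindex_mul {α' : Type*} [Fintype α'] [DecidableEq β] (e : α ≃ α')
    (M : Matrix α β ℝ) (Y : Matrix β γ ℝ) :
    (Matrix.reindex e (Equiv.refl β) M) * Y = Matrix.reindex e (Equiv.refl γ) (M * Y) := by
  ext i' j
  simp [Matrix.mul_apply, Matrix.reindex_apply, Matrix.submatrix_apply]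

lemma reindex_sub {α' : Type*} [Fintype α'] (e : α ≃ α') (A B : Matrix α β ℝ) :
    Matrix.reindex e (Equiv.refl β) A - Matrix.reindex e (Equiv.refl β) B =
      Matrix.reindex e (Equiv.refl β) (A - B) := by
  ext i' j
  simp [Matrix.reindex_apply, Matrix.submatrix_apply]

lemma gamma_sub {c r d m : ℕ} (S : Fin m → Fin r → Fin d) (W W' : Matrix (Fin c) (Fin r) ℝ) :
    gamma S W - gamma S W' = gamma S (W - W') := by
  ext ik j
  simp only [Matrix.sub_apply, gamma, ← Finset.sum_sub_distrib]
  refine Finset.sum_congr rfl fun p _ => ?_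
  split <;> simp

lemma gamma_frob {c r d m : ℕ} (S : Fin m → Fin r → Fin d)
    (hinj : ∀ k, Function.Injective (S k)) (W : Matrix (Fin c) (Fin r) ℝ) :
    frobNorm (gamma S W) = Real.sqrt m * frobNorm W := by
  have hsq : frobNorm (gamma S W) ^ 2 = (m : ℝ) * frobNorm W ^ 2 := by
    rw [frob_sq, frob_sq, Fintype.sum_prod_type]
    have hinner : ∀ (i : Fin c) (k : Fin m),
        (∑ j, (∑ p, if S k p = j then W i p else 0) ^ 2) = ∑ p, (W i p) ^ 2 := by
      intro i k
      have hterm : ∀ (p q : Fin r) (j : Fin d),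
          (if S k p = j then W i p else 0) * (if S k q = j then W i q else 0) =
          if S k p = j ∧ S k q = j then W i p * W i q else 0 := by
        intro p q j
        by_cases h1 : S k p = j <;> by_cases h2 : S k q = j <;> simp [h1, h2]
      have h2 : ∀ p q : Fin r, (∑ j, if S k p = j ∧ S k q = j then W i p * W i q else 0) =
          if q = p then W i p ^ 2 else 0 := by
        intro p q
        by_cases h : q = p
        · subst h
          rw [if_pos rfl]
          simp only [and_self]
          rw [Finset.sum_ite_eq Finset.univ (S k q) (fun _ => W i q * W i q)]
          simp [sq]
        · rw [if_neg h]
          have hno : ∀ j : Fin d, ¬(S k p = j ∧ S k q = j) := by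
            rintro j ⟨ha', hb'⟩
            exact h (hinj k (hb'.trans ha'.symm))
          exact Finset.sum_eq_zero fun j _ => if_neg (hno j)
      calc ∑ j, (∑ p, if S k p = j then W i p else 0) ^ 2
          = ∑ j, ∑ p, ∑ q, (if S k p = j then W i p else 0) * (if S k q = j then W i q else 0) := by
            refine Finset.sum_congr rfl fun j _ => ?_
            rw [sq, Finset.sum_mul_sum]
        _ = ∑ p, ∑ q, ∑ j, (if S k p = j then W i p else 0) * (if S k q = j then W i q else 0) := by
            rw [Finset.sum_comm]
            exact Finset.sum_congr rfl fun p _ => Finset.sum_comm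
        _ = ∑ p, ∑ q, if q = p then W i p ^ 2 else 0 := by
            refine Finset.sum_congr rfl fun p _ => Finset.sum_congr rfl fun q _ => ?_
            simp_rw [hterm]
            exact h2 p q
        _ = ∑ p, (W i p) ^ 2 := by
            refine Finset.sum_congr rfl fun p _ => ?_
            rw [Finset.sum_ite_eq' Finset.univ p (fun _ => W i p ^ 2)]
            simp
    simp only [gamma]
    simp_rw [hinner]
    rw [Finset.mul_sum]
    refine Finset.sum_congr rfl fun i _ => ?_
    rw [Finset.sum_const, Finset.card_univ, Fintype.card_fin, nsmul_eq_mul]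
  have h1 : frobNorm (gamma S W) = Real.sqrt (frobNorm (gamma S W) ^ 2) :=
    (Real.sqrt_sq (frob_nonneg _)).symm
  rw [h1, hsq, Real.sqrt_mul (Nat.cast_nonneg m), Real.sqrt_sq (frob_nonneg _)]

lemma frob_add_le (A B : Matrix α β ℝ) : frobNorm (A + B) ≤ frobNorm A + frobNorm B := by
  rw [frob_eq, frob_eq, frob_eq]
  have : toEuc (A + B) = toEuc A + toEuc B := rfl
  rw [this]
  exact norm_add_le _ _

lemma eq_zero_of_frob_nonpos {M : Matrix α β ℝ} (h : frobNorm M ≤ 0) : M = 0 := by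
  have h1 : ‖toEuc M‖ = 0 := le_antisymm (by rwa [← frob_eq]) (norm_nonneg _)
  have h2 : toEuc M = 0 := norm_eq_zero.mp h1
  ext i j
  have := congrArg (fun v => v (i, j)) h2
  simpa [toEuc] using this

lemma spec_nonneg [DecidableEq β] (M : Matrix α β ℝ) : 0 ≤ specNorm M := norm_nonneg _

lemma spec_zero [DecidableEq β] : specNorm (0 : Matrix α β ℝ) = 0 := by
  simp [specNorm]

lemma alg1 (fX PL LR eps sj A B aj : ℝ) (hsj : sj ≠ 0) (heps : eps ≠ 0) :
    (fX * 2 * PL * LR ^ 2 / eps) * (A ^ 2 * B ^ 2 * aj / sj) =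
    LR * ((A * B) ^ 2 * (2 * 1 * (aj * (LR * (PL * fX)) / (eps * sj)))) := by
  field_simp

lemma alg2 (fX PL LR eps sj A B aj k : ℝ) (hsj : sj ≠ 0) (heps : eps ≠ 0) :
    (fX * 2 * PL * LR ^ 2 / eps) * (A ^ 2 * B ^ 2 * aj * k / sj) =
    LR * ((A * B) ^ 2 * (2 * k * (aj * (LR * (PL * fX)) / (eps * sj)))) := by
  field_simp

lemma log_add_one_le_sqrt {x : ℝ} (hx : 0 ≤ x) : Real.log (1 + x) ≤ Real.sqrt x := by
  have key : ∀ z : ℝ, 0 ≤ z → Real.log (1 + z ^ 2) ≤ z := by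
    intro z hz
    have hder : ∀ t : ℝ, HasDerivAt (fun u : ℝ => u - Real.log (1 + u ^ 2))
        (1 - 2 * t / (1 + t ^ 2)) t := by
      intro t
      have h1 : HasDerivAt (fun u : ℝ => 1 + u ^ 2) (2 * t) t := by
        have := (hasDerivAt_pow 2 t).const_add (1 : ℝ)
        simpa using this
      have h2 : (1 + t ^ 2 : ℝ) ≠ 0 := by positivity
      exact (hasDerivAt_id t).sub (h1.log h2)
    have hmono : Monotone (fun u : ℝ => u - Real.log (1 + u ^ 2)) := by
      apply monotone_of_deriv_nonneg
      · exact fun t => (hder t).differentiableAt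
      · intro t
        rw [(hder t).deriv]
        have h3 : (0 : ℝ) < 1 + t ^ 2 := by positivity
        rw [sub_nonneg, div_le_one h3]
        nlinarith [sq_nonneg (1 - t)]
    have h := hmono hz
    simp only [zero_pow, sub_zero] at h
    simp only [ne_eq, OfNat.ofNat_ne_zero, not_false_eq_true, zero_pow, add_zero,
      Real.log_one, sub_zero] at h
    linarith [h]
  have := key (Real.sqrt x) (Real.sqrt_nonneg x)
  rwa [Real.sq_sqrt hx] at this

end Aux

/-- covering number bound for general CNNs whose layers `{0,…,L−1}` are
partitioned into fully connected layers `SA` (with `‖Aᵢ‖_F ≤ aᵢ`) and convolutional layers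
`SW` (with `Cᵢ = γᵢ(Wᵢ)`, `‖Wᵢ‖_F ≤ aᵢ`), all layers satisfying `‖Cᵢ‖_σ ≤ sᵢ`:
for every ε > 0 there is a finite `U` with `ln |U| ≤ (‖X‖_F · R_C / ε)^(1/2)` that
ε-covers all network outputs, where
`R_C = (2∏ ρᵢ sᵢ)·(Σ_{i∈SA} dᵢ² d_{i−1}² aᵢ/sᵢ + Σ_{i∈SW} cᵢ² rᵢ² aᵢ √(dᵢ/cᵢ)/sᵢ)·L²`. -/
theorem covering_number_cnn (L n : ℕ) (d c r m : ℕ → ℕ)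
    (SA SW : Finset ℕ) (hpart : SA ∪ SW = Finset.range L) (hdisj : Disjoint SA SW)
    (hd : ∀ i ∈ SW, d (i+1) = c i * m i)
    (Smap : ∀ i : ℕ, Fin (m i) → Fin (r i) → Fin (d i))
    (hSmap : ∀ i ∈ SW, ∀ k, Function.Injective (Smap i k))
    (X : Matrix (Fin (d 0)) (Fin n) ℝ)
    (σ : ∀ i : ℕ, Matrix (Fin (d (i+1))) (Fin n) ℝ → Matrix (Fin (d (i+1))) (Fin n) ℝ)
    (ρ s a : ℕ → ℝ)
    (hρ : ∀ i < L, 0 ≤ ρ i) (hs : ∀ i < L, 0 < s i) (ha : ∀ i < L, 0 < a i)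
    (hσ : ∀ i < L, ∀ A B : Matrix (Fin (d (i+1))) (Fin n) ℝ,
      frobNorm (σ i A - σ i B) ≤ ρ i * frobNorm (A - B))
    (hσ0 : ∀ i < L, σ i 0 = 0) :
    ∀ ε > (0 : ℝ), ∃ U : Finset (Matrix (Fin (d L)) (Fin n) ℝ),
      Real.log U.card ≤ Real.sqrt (frobNorm X *
        ((2 * ∏ i ∈ Finset.range L, ρ i * s i) *
          ((∑ i ∈ SA, (d (i+1) : ℝ) ^ 2 * (d i : ℝ) ^ 2 * a i / s i) +
           (∑ i ∈ SW,
             (c i : ℝ) ^ 2 * (r i : ℝ) ^ 2 * a i * Real.sqrt ((d (i+1) : ℝ) / (c i : ℝ)) / s i)) *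
          (L : ℝ) ^ 2) / ε) ∧
      ∀ C : ∀ i : ℕ, Matrix (Fin (d (i+1))) (Fin (d i)) ℝ,
        (∀ i < L, specNorm (C i) ≤ s i) →
        (∀ i ∈ SA, frobNorm (C i) ≤ a i) →
        (∀ i (hi : i ∈ SW), ∃ W : Matrix (Fin (c i)) (Fin (r i)) ℝ, frobNorm W ≤ a i ∧
          C i = Matrix.reindex (finProdFinEquiv.trans (finCongr (hd i hi).symm))
            (Equiv.refl (Fin (d i))) (gamma (Smap i) W)) →
        ∃ u ∈ U, frobNorm (netOutput d C σ X L - u) ≤ ε := by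
  classical
  intro ε hε
  have hSArange : ∀ i ∈ SA, i < L := fun i hi =>
    Finset.mem_range.mp (hpart ▸ Finset.mem_union_left SW hi)
  have hSWrange : ∀ i ∈ SW, i < L := fun i hi =>
    Finset.mem_range.mp (hpart ▸ Finset.mem_union_right SA hi)
  -- degenerate case: some ρ is zero or X = 0
  by_cases hdeg : frobNorm X = 0 ∨ ∃ j, j < L ∧ ρ j = 0
  · refine ⟨{(0 : Matrix (Fin (d L)) (Fin n) ℝ)}, ?_, ?_⟩
    · simpa using Real.sqrt_nonneg _
    · intro C h1 h2 h3
      refine ⟨0, Finset.mem_singleton_self _, ?_⟩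
      have hzero : netOutput d C σ X L = 0 := by
        rcases hdeg with hX | ⟨j, hjL, hρj⟩
        · -- X = 0
          have hX0 : X = 0 := Aux.eq_zero_of_frob_nonpos (le_of_eq hX)
          have : ∀ k, k ≤ L → netOutput d C σ X k = 0 := by
            intro k
            induction k with
            | zero => intro _; simpa [netOutput]
            | succ t ih =>
              intro hkl
              have ht : t < L := hkl
              show σ t (C t * netOutput d C σ X t) = 0
              rw [ih (Nat.le_of_lt ht), Matrix.mul_zero, hσ0 t ht]
          exact this L le_rfl
        · -- σ j is identically 0
          have hσj : ∀ A, σ j A = 0 := by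
            intro A
            have h := hσ j hjL A 0
            rw [hσ0 j hjL, hρj, zero_mul, sub_zero] at h
            exact Aux.eq_zero_of_frob_nonpos h
          have : ∀ k, k ≤ L → j < k → netOutput d C σ X k = 0 := by
            intro k
            induction k with
            | zero => omega
            | succ t ih =>
              intro hkl hjk
              show σ t (C t * netOutput d C σ X t) = 0
              by_cases hjt : j < t
              · rw [ih (by omega) hjt, Matrix.mul_zero, hσ0 t (by omega)]
              · have : t = j := by omega
                subst this
                exact hσj _
          exact this L le_rfl hjL
      rw [hzero]
      have : (0 : Matrix (Fin (d L)) (Fin n) ℝ) - 0 = 0 := by simp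
      rw [this, Aux.frob_zero]
      linarith
  push_neg at hdeg
  obtain ⟨hX0, hρpos'⟩ := hdeg
  have hXpos : 0 < frobNorm X := lt_of_le_of_ne (Aux.frob_nonneg X) (Ne.symm hX0)
  have hρpos : ∀ j < L, 0 < ρ j := fun j hj =>
    lt_of_le_of_ne (hρ j hj) (Ne.symm (hρpos' j hj))
  by_cases hL0 : L = 0
  · subst hL0
    refine ⟨{X}, by simpa using Real.sqrt_nonneg _, ?_⟩
    intro C _ _ _
    refine ⟨X, Finset.mem_singleton_self _, ?_⟩
    show frobNorm (X - X) ≤ ε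
    rw [sub_self, Aux.frob_zero]; linarith
  have hL1 : 1 ≤ L := Nat.one_le_iff_ne_zero.mpr hL0
  set P : ℕ → ℝ := fun ℓ => ∏ i ∈ Finset.range ℓ, ρ i * s i with hPdef
  have hPpos : ∀ ℓ ≤ L, 0 < P ℓ := by
    intro ℓ hℓ
    refine Finset.prod_pos fun i hi => ?_
    have hiL : i < L := lt_of_lt_of_le (Finset.mem_range.mp hi) hℓ
    exact mul_pos (hρpos i hiL) (hs i hiL)
  set T : ℝ := P L * frobNorm X with hTdef
  have hTpos : 0 < T := mul_pos (hPpos L le_rfl) hXpos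
  set ehat : ℕ → ℝ := fun j => ε * s j / (L * T) with hehatdef
  have hehatpos : ∀ j < L, 0 < ehat j := by
    intro j hj
    have : (0:ℝ) < L := by exact_mod_cast hL1
    exact div_pos (mul_pos hε (hs j hj)) (mul_pos this hTpos)
  -- norm bound on intermediate outputs
  have outnorm : ∀ (C : ∀ i : ℕ, Matrix (Fin (d (i+1))) (Fin (d i)) ℝ),
      (∀ i < L, specNorm (C i) ≤ s i) →
      ∀ ℓ, ℓ ≤ L → frobNorm (netOutput d C σ X ℓ) ≤ P ℓ * frobNorm X := by
    intro C h1 ℓ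
    induction ℓ with
    | zero =>
      intro _
      show frobNorm X ≤ P 0 * frobNorm X
      simp [hPdef]
    | succ t ih =>
      intro htL1
      have htL : t < L := htL1
      have hout : netOutput d C σ X (t+1) = σ t (C t * netOutput d C σ X t) := rfl
      rw [hout]
      have hz : σ t (C t * netOutput d C σ X t) =
          σ t (C t * netOutput d C σ X t) - σ t 0 := by rw [hσ0 t htL, sub_zero]
      rw [hz]
      calc frobNorm (σ t (C t * netOutput d C σ X t) - σ t 0)
          ≤ ρ t * frobNorm (C t * netOutput d C σ X t - 0) := hσ t htL _ 0
        _ = ρ t * frobNorm (C t * netOutput d C σ X t) := by rw [sub_zero]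
        _ ≤ ρ t * (s t * frobNorm (netOutput d C σ X t)) := by
            refine mul_le_mul_of_nonneg_left ?_ (hρ t htL)
            calc frobNorm (C t * netOutput d C σ X t)
                ≤ specNorm (C t) * frobNorm (netOutput d C σ X t) := Aux.frob_mul_le_spec _ _
              _ ≤ s t * frobNorm (netOutput d C σ X t) :=
                  mul_le_mul_of_nonneg_right (h1 t htL) (Aux.frob_nonneg _)
        _ ≤ ρ t * (s t * (P t * frobNorm X)) := by
            refine mul_le_mul_of_nonneg_left (mul_le_mul_of_nonneg_left ?_ (hs t htL).le) (hρ t htL)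
            exact ih (Nat.le_of_lt htL)
        _ = P (t+1) * frobNorm X := by
            simp only [hPdef]
            rw [Finset.prod_range_succ]
            ring
  set Mj : ℕ → ℝ := fun j =>
    if j ∈ SA then (1 + 2 * a j / ehat j) ^ (d (j+1) * d j)
    else if d (j+1) = 0 then 1
    else (1 + 2 * a j * Real.sqrt (m j) / ehat j) ^ (c j * r j) with hMjdef
  -- per-layer nets
  have key : ∀ j : ℕ, ∃ N : Finset (Matrix (Fin (d (j+1))) (Fin (d j)) ℝ), j < L →
      ((N.card : ℝ) ≤ Mj j ∧
       (∀ Pm ∈ N, ∀ Y : Matrix (Fin (d j)) (Fin n) ℝ,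
          frobNorm (Pm * Y) ≤ s j * frobNorm Y) ∧
       (∀ CC : Matrix (Fin (d (j+1))) (Fin (d j)) ℝ, specNorm CC ≤ s j →
          (j ∈ SA → frobNorm CC ≤ a j) →
          (∀ hj : j ∈ SW, ∃ W : Matrix (Fin (c j)) (Fin (r j)) ℝ, frobNorm W ≤ a j ∧
            CC = Matrix.reindex (finProdFinEquiv.trans (finCongr (hd j hj).symm))
              (Equiv.refl (Fin (d j))) (gamma (Smap j) W)) →
          ∃ Pm ∈ N, frobNorm (CC - Pm) ≤ ehat j)) := by
    intro j
    by_cases hjL : j < L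
    swap
    · exact ⟨∅, fun h => absurd h hjL⟩
    have hjrange : j ∈ SA ∪ SW := hpart ▸ Finset.mem_range.mpr hjL
    have haj := ha j hjL
    have hsj := hs j hjL
    have hej := hehatpos j hjL
    rcases Finset.mem_union.mp hjrange with hjA | hjW
    · -- fully connected layer
      obtain ⟨N, hNK, hNcard, hNcov⟩ := Aux.matrix_net
        {M : Matrix (Fin (d (j+1))) (Fin (d j)) ℝ | frobNorm M ≤ a j ∧
          ∀ Y : Matrix (Fin (d j)) (Fin n) ℝ, frobNorm (M * Y) ≤ s j * frobNorm Y}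
        haj.le hej (fun M hM => hM.1)
      refine ⟨N, fun _ => ⟨?_, ?_, ?_⟩⟩
      · rw [hMjdef]
        simp only [if_pos hjA]
        simpa [Fintype.card_fin] using hNcard
      · intro Pm hPm Y
        exact (hNK hPm).2 Y
      · intro CC hspec hfrob _
        refine hNcov CC ⟨hfrob hjA, fun Y => ?_⟩
        calc frobNorm (CC * Y) ≤ specNorm CC * frobNorm Y := Aux.frob_mul_le_spec _ _
          _ ≤ s j * frobNorm Y := mul_le_mul_of_nonneg_right hspec (Aux.frob_nonneg _)
    · -- convolutional layer
      have hjnA : j ∉ SA := fun hjA => (Finset.disjoint_left.mp hdisj) hjA hjW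
      have hdj : d (j+1) = c j * m j := hd j hjW
      by_cases hdz : d (j+1) = 0
      · refine ⟨{(0 : Matrix (Fin (d (j+1))) (Fin (d j)) ℝ)}, fun _ => ⟨?_, ?_, ?_⟩⟩
        · rw [hMjdef]
          simp [if_neg hjnA, if_pos hdz]
        · intro Pm hPm Y
          rw [Finset.mem_singleton.mp hPm, Matrix.zero_mul, Aux.frob_zero]
          exact mul_nonneg hsj.le (Aux.frob_nonneg _)
        · intro CC _ _ _
          refine ⟨0, Finset.mem_singleton_self _, ?_⟩
          have hCC : CC = 0 := by
            ext i k
            have h0 : (i : ℕ) < d (j+1) := i.isLt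
            omega
          rw [hCC, sub_self, Aux.frob_zero]
          exact hej.le
      · -- genuine conv layer: net in W-space
        have hm1 : 1 ≤ m j := by
          rcases Nat.eq_zero_or_pos (m j) with h | h
          · rw [hdj, h, Nat.mul_zero] at hdz
            exact absurd rfl hdz
          · exact h
        have hsqm : (1:ℝ) ≤ Real.sqrt (m j) := by
          rw [show (1:ℝ) = Real.sqrt 1 by rw [Real.sqrt_one]]
          exact Real.sqrt_le_sqrt (by exact_mod_cast hm1)
        have hsqm0 : (0:ℝ) < Real.sqrt (m j) := lt_of_lt_of_le one_pos hsqm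
        set δ : ℝ := ehat j / Real.sqrt (m j) with hδdef
        have hδpos : 0 < δ := div_pos hej hsqm0
        set e' : (Fin (c j) × Fin (m j)) ≃ Fin (d (j+1)) :=
          finProdFinEquiv.trans (finCongr hdj.symm) with he'def
        set buildC : Matrix (Fin (c j)) (Fin (r j)) ℝ → Matrix (Fin (d (j+1))) (Fin (d j)) ℝ :=
          fun W => Matrix.reindex e' (Equiv.refl (Fin (d j))) (gamma (Smap j) W) with hbuilddef
        obtain ⟨NW, hNWK, hNWcard, hNWcov⟩ := Aux.matrix_net
          {W : Matrix (Fin (c j)) (Fin (r j)) ℝ | frobNorm W ≤ a j ∧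
            ∀ Y : Matrix (Fin (d j)) (Fin n) ℝ, frobNorm (buildC W * Y) ≤ s j * frobNorm Y}
          haj.le hδpos (fun W hW => hW.1)
        have hbuilddiff : ∀ W W', buildC W - buildC W' =
            Matrix.reindex e' (Equiv.refl (Fin (d j))) (gamma (Smap j) (W - W')) := by
          intro W W'
          rw [hbuilddef]
          simp only []
          rw [Aux.reindex_sub, Aux.gamma_sub]
        have hbuildfrob : ∀ W W', frobNorm (buildC W - buildC W') =
            Real.sqrt (m j) * frobNorm (W - W') := by
          intro W W'
          rw [hbuilddiff, Aux.reindex_frob, Aux.gamma_frob _ (hSmap j hjW)]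
        refine ⟨NW.image buildC, fun _ => ⟨?_, ?_, ?_⟩⟩
        · rw [hMjdef]
          simp only [if_neg hjnA, if_neg hdz]
          calc ((NW.image buildC).card : ℝ) ≤ (NW.card : ℝ) := by
                exact_mod_cast Finset.card_image_le
            _ ≤ (1 + 2 * a j / δ) ^ (Fintype.card (Fin (c j)) * Fintype.card (Fin (r j))) :=
                hNWcard
            _ = (1 + 2 * a j * Real.sqrt (m j) / ehat j) ^ (c j * r j) := by
                rw [Fintype.card_fin, Fintype.card_fin]
                congr 1
                rw [hδdef]
                field_simp
        · intro Pm hPm Y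
          obtain ⟨W, hW, rfl⟩ := Finset.mem_image.mp hPm
          exact (hNWK hW).2 Y
        · intro CC hspec _ hconv
          obtain ⟨W, hWfrob, hCCeq⟩ := hconv hjW
          have hCCeq' : CC = buildC W := hCCeq
          have hWK : W ∈ {W : Matrix (Fin (c j)) (Fin (r j)) ℝ | frobNorm W ≤ a j ∧
              ∀ Y : Matrix (Fin (d j)) (Fin n) ℝ, frobNorm (buildC W * Y) ≤ s j * frobNorm Y} := by
            refine ⟨hWfrob, fun Y => ?_⟩
            rw [← hCCeq']
            calc frobNorm (CC * Y) ≤ specNorm CC * frobNorm Y := Aux.frob_mul_le_spec _ _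
              _ ≤ s j * frobNorm Y := mul_le_mul_of_nonneg_right hspec (Aux.frob_nonneg _)
          obtain ⟨W', hW', hWdist⟩ := hNWcov W hWK
          refine ⟨buildC W', Finset.mem_image_of_mem _ hW', ?_⟩
          rw [hCCeq', hbuildfrob]
          calc Real.sqrt (m j) * frobNorm (W - W') ≤ Real.sqrt (m j) * δ :=
              mul_le_mul_of_nonneg_left hWdist hsqm0.le
            _ = ehat j := by rw [hδdef]; field_simp
  choose N hN using key
  -- main induction on layers
  have main : ∀ ℓ, ℓ ≤ L → ∃ U : Finset (Matrix (Fin (d ℓ)) (Fin n) ℝ),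
      (U.card : ℝ) ≤ ∏ j ∈ Finset.range ℓ, Mj j ∧
      ∀ C : ∀ i : ℕ, Matrix (Fin (d (i+1))) (Fin (d i)) ℝ,
        (∀ i < L, specNorm (C i) ≤ s i) →
        (∀ i ∈ SA, frobNorm (C i) ≤ a i) →
        (∀ i (hi : i ∈ SW), ∃ W : Matrix (Fin (c i)) (Fin (r i)) ℝ, frobNorm W ≤ a i ∧
          C i = Matrix.reindex (finProdFinEquiv.trans (finCongr (hd i hi).symm))
            (Equiv.refl (Fin (d i))) (gamma (Smap i) W)) →
        ∃ u ∈ U, frobNorm (netOutput d C σ X ℓ - u) ≤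
          (∑ j ∈ Finset.range ℓ, P ℓ / s j * ehat j) * frobNorm X := by
    intro ℓ
    induction ℓ with
    | zero =>
      intro _
      refine ⟨{X}, by simp, fun C _ _ _ => ⟨X, Finset.mem_singleton_self X, ?_⟩⟩
      show frobNorm (X - X) ≤ _
      rw [sub_self, Aux.frob_zero]
      simp
    | succ t ih =>
      intro htL1
      have htL : t < L := htL1
      obtain ⟨U, hUcard, hUcov⟩ := ih (Nat.le_of_lt htL)
      obtain ⟨hNcard, hNop, hNcov⟩ := hN t htL
      refine ⟨(U ×ˢ N t).image (fun pr => σ t (pr.2 * pr.1)), ?_, ?_⟩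
      · calc (((U ×ˢ N t).image (fun pr => σ t (pr.2 * pr.1))).card : ℝ)
            ≤ ((U ×ˢ N t).card : ℝ) := by exact_mod_cast Finset.card_image_le
          _ = (U.card : ℝ) * ((N t).card : ℝ) := by
              rw [Finset.card_product]; push_cast; ring
          _ ≤ (∏ j ∈ Finset.range t, Mj j) * Mj t := by
              refine mul_le_mul hUcard hNcard (Nat.cast_nonneg _) ?_
              exact le_trans (Nat.cast_nonneg U.card) hUcard
          _ = ∏ j ∈ Finset.range (t+1), Mj j := (Finset.prod_range_succ Mj t).symm
      · intro C h1 h2 h3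
        obtain ⟨u, hu, herr⟩ := hUcov C h1 h2 h3
        obtain ⟨Pm, hPm, hPdist⟩ := hNcov (C t) (h1 t htL) (fun h => h2 t h) (fun h => h3 t h)
        refine ⟨σ t (Pm * u), Finset.mem_image.mpr ⟨(u, Pm), Finset.mem_product.mpr ⟨hu, hPm⟩, rfl⟩, ?_⟩
        have hout : netOutput d C σ X (t+1) = σ t (C t * netOutput d C σ X t) := rfl
        rw [hout]
        have hsplit : C t * netOutput d C σ X t - Pm * u =
            Pm * (netOutput d C σ X t - u) + (C t - Pm) * netOutput d C σ X t := by
          rw [Matrix.mul_sub, Matrix.sub_mul]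
          abel
        have houtn := outnorm C h1 t (Nat.le_of_lt htL)
        calc frobNorm (σ t (C t * netOutput d C σ X t) - σ t (Pm * u))
            ≤ ρ t * frobNorm (C t * netOutput d C σ X t - Pm * u) := hσ t htL _ _
          _ ≤ ρ t * (frobNorm (Pm * (netOutput d C σ X t - u)) +
                frobNorm ((C t - Pm) * netOutput d C σ X t)) := by
              refine mul_le_mul_of_nonneg_left ?_ (hρ t htL)
              rw [hsplit]
              exact Aux.frob_add_le _ _
          _ ≤ ρ t * (s t * frobNorm (netOutput d C σ X t - u) +
                frobNorm (C t - Pm) * frobNorm (netOutput d C σ X t)) := by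
              refine mul_le_mul_of_nonneg_left (add_le_add ?_ ?_) (hρ t htL)
              · exact hNop Pm hPm _
              · exact Aux.frob_mul_le_frob _ _
          _ ≤ ρ t * (s t * ((∑ j ∈ Finset.range t, P t / s j * ehat j) * frobNorm X) +
                ehat t * (P t * frobNorm X)) := by
              refine mul_le_mul_of_nonneg_left (add_le_add ?_ ?_) (hρ t htL)
              · exact mul_le_mul_of_nonneg_left herr (hs t htL).le
              · exact mul_le_mul hPdist houtn (Aux.frob_nonneg _) (hehatpos t htL).le
          _ = (∑ j ∈ Finset.range (t+1), P (t+1) / s j * ehat j) * frobNorm X := by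
              have hPsucc : P (t+1) = P t * (ρ t * s t) := by
                simp only [hPdef]
                rw [Finset.prod_range_succ]
              rw [Finset.sum_range_succ, add_mul, hPsucc]
              have hterm : ∀ j ∈ Finset.range t,
                  P t * (ρ t * s t) / s j * ehat j = (ρ t * s t) * (P t / s j * ehat j) := by
                intro j hj
                ring
              rw [Finset.sum_congr rfl hterm, ← Finset.mul_sum]
              have hst : s t ≠ 0 := (hs t htL).ne'
              field_simp
  obtain ⟨U, hUcard, hUcov⟩ := main L le_rfl
  -- the total error equals ε
  have hLne : (L:ℝ) ≠ 0 := Nat.cast_ne_zero.mpr hL0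
  have hXne : frobNorm X ≠ 0 := hXpos.ne'
  have hPLne : P L ≠ 0 := (hPpos L le_rfl).ne'
  have hsumε : (∑ j ∈ Finset.range L, P L / s j * ehat j) * frobNorm X = ε := by
    have hterm : ∀ j ∈ Finset.range L, P L / s j * ehat j = ε / (L * frobNorm X) := by
      intro j hj
      have hjL := Finset.mem_range.mp hj
      have hsj : s j ≠ 0 := (hs j hjL).ne'
      simp only [hehatdef, hTdef]
      field_simp
    rw [Finset.sum_congr rfl hterm, Finset.sum_const, Finset.card_range, nsmul_eq_mul]
    field_simp
  refine ⟨U, ?_, ?_⟩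
  swap
  · intro C h1 h2 h3
    obtain ⟨u, hu, herr⟩ := hUcov C h1 h2 h3
    exact ⟨u, hu, by rwa [hsumε] at herr⟩
  -- the log-cardinality bound
  have hUne : U.Nonempty := by
    have hzero : ∀ i (hi : i ∈ SW),
        ∃ W : Matrix (Fin (c i)) (Fin (r i)) ℝ, frobNorm W ≤ a i ∧
          (0 : Matrix (Fin (d (i+1))) (Fin (d i)) ℝ) =
            Matrix.reindex (finProdFinEquiv.trans (finCongr (hd i hi).symm))
              (Equiv.refl (Fin (d i))) (gamma (Smap i) W) := by
      intro i hi
      refine ⟨0, by rw [Aux.frob_zero]; exact (ha i (hSWrange i hi)).le, ?_⟩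
      ext p q
      simp [gamma, Matrix.reindex_apply, Matrix.submatrix_apply]
    obtain ⟨u, hu, _⟩ := hUcov (fun _ => 0)
      (fun i hi => by rw [Aux.spec_zero]; exact (hs i hi).le)
      (fun i hi => by rw [Aux.frob_zero]; exact (ha i (hSArange i hi)).le)
      hzero
    exact ⟨u, hu⟩
  set tj : ℕ → ℝ := fun j => a j / ehat j with htjdef
  set kap : ℕ → ℝ := fun j =>
    if j ∈ SA then 1 else Real.sqrt ((d (j+1) : ℝ) / (c j : ℝ)) with hkapdef
  set Dj : ℕ → ℝ := fun j =>
    if j ∈ SA then (d (j+1) : ℝ) * (d j : ℝ) else (c j : ℝ) * (r j : ℝ) with hDjdef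
  set Gj : ℕ → ℝ := fun j => Dj j * Real.sqrt (2 * kap j * tj j) with hGjdef
  have hDnn : ∀ j, 0 ≤ Dj j := by
    intro j
    simp only [hDjdef]
    split_ifs <;> positivity
  have hknn : ∀ j, 0 ≤ kap j := by
    intro j
    simp only [hkapdef]
    split_ifs
    · exact zero_le_one
    · exact Real.sqrt_nonneg _
  have htnn : ∀ j < L, 0 ≤ tj j := fun j hj =>
    div_nonneg (ha j hj).le (hehatpos j hj).le
  have hGnn : ∀ j ∈ Finset.range L, 0 ≤ Gj j := by
    intro j hj
    exact mul_nonneg (hDnn j) (Real.sqrt_nonneg _)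
  -- each Mj is at least 1
  have hMj1 : ∀ j ∈ Finset.range L, (1:ℝ) ≤ Mj j := by
    intro j hj
    have hjL := Finset.mem_range.mp hj
    have haj := ha j hjL
    have hej := hehatpos j hjL
    simp only [hMjdef]
    split_ifs with hA hz
    · have hb : (1:ℝ) ≤ 1 + 2 * a j / ehat j := by
        have : (0:ℝ) ≤ 2 * a j / ehat j := by positivity
        linarith
      calc (1:ℝ) = 1 ^ (d (j+1) * d j) := (one_pow _).symm
        _ ≤ _ := pow_le_pow_left₀ zero_le_one hb _
    · exact le_refl 1
    · have hb : (1:ℝ) ≤ 1 + 2 * a j * Real.sqrt (m j) / ehat j := by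
        have : (0:ℝ) ≤ 2 * a j * Real.sqrt (m j) / ehat j := by positivity
        linarith
      calc (1:ℝ) = 1 ^ (c j * r j) := (one_pow _).symm
        _ ≤ _ := pow_le_pow_left₀ zero_le_one hb _
  -- log of each net size
  have hlogMj : ∀ j ∈ Finset.range L, Real.log (Mj j) ≤ Gj j := by
    intro j hj
    have hjL := Finset.mem_range.mp hj
    have haj := ha j hjL
    have hej := hehatpos j hjL
    by_cases hA : j ∈ SA
    · have hMeq : Mj j = (1 + 2 * a j / ehat j) ^ (d (j+1) * d j) := by
        simp only [hMjdef, if_pos hA]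
      rw [hMeq, Real.log_pow]
      have hx : (0:ℝ) ≤ 2 * a j / ehat j := by positivity
      have hlog := Aux.log_add_one_le_sqrt hx
      have hxeq : 2 * a j / ehat j = 2 * kap j * tj j := by
        simp only [hkapdef, htjdef, if_pos hA]
        ring
      calc (↑(d (j+1) * d j) : ℝ) * Real.log (1 + 2 * a j / ehat j)
          ≤ (↑(d (j+1) * d j) : ℝ) * Real.sqrt (2 * a j / ehat j) :=
            mul_le_mul_of_nonneg_left hlog (Nat.cast_nonneg _)
        _ = Gj j := by
            rw [hxeq]
            simp only [hGjdef, hDjdef, if_pos hA]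
            push_cast
            ring
    · have hjW : j ∈ SW := by
        rcases Finset.mem_union.mp (hpart ▸ Finset.mem_range.mpr hjL) with h | h
        · exact absurd h hA
        · exact h
      have hdj := hd j hjW
      by_cases hz : d (j+1) = 0
      · have hMeq : Mj j = 1 := by simp only [hMjdef, if_neg hA, if_pos hz]
        rw [hMeq, Real.log_one]
        exact hGnn j hj
      · have hMeq : Mj j = (1 + 2 * a j * Real.sqrt (m j) / ehat j) ^ (c j * r j) := by
          simp only [hMjdef, if_neg hA, if_neg hz]
        have hcne : (c j : ℝ) ≠ 0 := by
          have : c j ≠ 0 := by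
            intro h
            rw [hdj, h, Nat.zero_mul] at hz
            exact hz rfl
          exact_mod_cast this
        have hkapeq : kap j = Real.sqrt (m j) := by
          simp only [hkapdef, if_neg hA]
          congr 1
          rw [hdj]
          push_cast
          field_simp
        rw [hMeq, Real.log_pow]
        have hx : (0:ℝ) ≤ 2 * a j * Real.sqrt (m j) / ehat j := by positivity
        have hlog := Aux.log_add_one_le_sqrt hx
        have hxeq : 2 * a j * Real.sqrt (m j) / ehat j = 2 * kap j * tj j := by
          rw [hkapeq]
          simp only [htjdef]
          field_simp
        calc (↑(c j * r j) : ℝ) * Real.log (1 + 2 * a j * Real.sqrt (m j) / ehat j)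
            ≤ (↑(c j * r j) : ℝ) * Real.sqrt (2 * a j * Real.sqrt (m j) / ehat j) :=
              mul_le_mul_of_nonneg_left hlog (Nat.cast_nonneg _)
          _ = Gj j := by
              rw [hxeq]
              simp only [hGjdef, hDjdef, if_neg hA]
              push_cast
              ring
  -- log of the cardinality
  have hlogcard : Real.log U.card ≤ ∑ j ∈ Finset.range L, Real.log (Mj j) := by
    have hpos : (0:ℝ) < U.card := by exact_mod_cast Finset.card_pos.mpr hUne
    have h1 : Real.log U.card ≤ Real.log (∏ j ∈ Finset.range L, Mj j) :=
      Real.log_le_log hpos hUcard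
    rwa [Real.log_prod (fun j hj => (by linarith [hMj1 j hj] : (0:ℝ) < Mj j).ne')] at h1
  -- Cauchy–Schwarz
  have hCS : (∑ j ∈ Finset.range L, Gj j) ^ 2 ≤
      (L:ℝ) * ∑ j ∈ Finset.range L, Dj j ^ 2 * (2 * kap j * tj j) := by
    have h := Finset.sum_mul_sq_le_sq_mul_sq (Finset.range L) (fun _ => (1:ℝ)) Gj
    simp only [one_mul, one_pow] at h
    rw [Finset.sum_const, Finset.card_range, nsmul_eq_mul, mul_one] at h
    refine h.trans (le_of_eq ?_)
    congr 1
    refine Finset.sum_congr rfl fun j hj => ?_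
    have hjL := Finset.mem_range.mp hj
    have hy : (0:ℝ) ≤ 2 * kap j * tj j :=
      mul_nonneg (mul_nonneg zero_le_two (hknn j)) (htnn j hjL)
    simp only [hGjdef]
    rw [mul_pow, Real.sq_sqrt hy]
  have hfinal1 : Real.log U.card ≤
      Real.sqrt ((L:ℝ) * ∑ j ∈ Finset.range L, Dj j ^ 2 * (2 * kap j * tj j)) := by
    refine (hlogcard.trans (Finset.sum_le_sum hlogMj)).trans ?_
    exact Real.le_sqrt_of_sq_le hCS
  -- identify the sqrt argument
  have hargeq : frobNorm X *
      ((2 * ∏ i ∈ Finset.range L, ρ i * s i) *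
        ((∑ i ∈ SA, (d (i+1) : ℝ) ^ 2 * (d i : ℝ) ^ 2 * a i / s i) +
         (∑ i ∈ SW,
           (c i : ℝ) ^ 2 * (r i : ℝ) ^ 2 * a i * Real.sqrt ((d (i+1) : ℝ) / (c i : ℝ)) / s i)) *
        (L : ℝ) ^ 2) / ε =
      (L:ℝ) * ∑ j ∈ Finset.range L, Dj j ^ 2 * (2 * kap j * tj j) := by
    set q : ℕ → ℝ := fun j => if j ∈ SA then (d (j+1) : ℝ) ^ 2 * (d j : ℝ) ^ 2 * a j / s j
      else (c j : ℝ) ^ 2 * (r j : ℝ) ^ 2 * a j * Real.sqrt ((d (j+1) : ℝ) / (c j : ℝ)) / s j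
        with hqdef
    have hq : (∑ i ∈ SA, (d (i+1) : ℝ) ^ 2 * (d i : ℝ) ^ 2 * a i / s i) +
        (∑ i ∈ SW,
          (c i : ℝ) ^ 2 * (r i : ℝ) ^ 2 * a i * Real.sqrt ((d (i+1) : ℝ) / (c i : ℝ)) / s i) =
        ∑ j ∈ Finset.range L, q j := by
      rw [← hpart, Finset.sum_union hdisj]
      congr 1
      · exact Finset.sum_congr rfl fun j hj => by simp only [hqdef, if_pos hj]
      · refine Finset.sum_congr rfl fun j hj => ?_
        have : j ∉ SA := fun h => (Finset.disjoint_left.mp hdisj) h hj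
        simp only [hqdef, if_neg this]
    rw [hq]
    have hPL : (∏ i ∈ Finset.range L, ρ i * s i) = P L := rfl
    rw [hPL]
    have hlin : frobNorm X * ((2 * P L) * (∑ j ∈ Finset.range L, q j) * (L:ℝ) ^ 2) / ε =
        ∑ j ∈ Finset.range L, (frobNorm X * 2 * P L * (L:ℝ) ^ 2 / ε) * q j := by
      rw [← Finset.mul_sum]
      ring
    rw [hlin, Finset.mul_sum]
    refine Finset.sum_congr rfl fun j hj => ?_
    have hjL := Finset.mem_range.mp hj
    have hsj : s j ≠ 0 := (hs j hjL).ne'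
    have htj : tj j = a j * ((L:ℝ) * (P L * frobNorm X)) / (ε * s j) := by
      simp only [htjdef, hehatdef, hTdef]
      rw [div_div_eq_mul_div]
    rw [htj]
    by_cases hA : j ∈ SA
    · simp only [hqdef, hDjdef, hkapdef, if_pos hA]
      exact Aux.alg1 _ _ _ _ _ _ _ _ hsj hε.ne'
    · simp only [hqdef, hDjdef, hkapdef, if_neg hA]
      exact Aux.alg2 _ _ _ _ _ _ _ _ _ hsj hε.ne'
  rw [hargeq]
  exact hfinal1
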